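/- If 𝒜 has enough projectives and 𝒫(𝒜) ⊆ 𝒞, then every 𝒞-quasi-isomorphism of complexes over 𝒜 is a quasi-isomorphism. -/

import Mathlib

open CategoryTheory Limits

universe v u

variable {A : Type u} [Category.{v} A] [Abelian A]

/-- A complex `X` is `𝒞`-acyclic if `Hom_𝒜(C, X)` is an acyclic complex of abelian
groups for every `C ∈ 𝒞`. -/
def CAcyclic (𝒞 : Set A) (X : CochainComplex A ℤ) : Prop :=
  ∀ C ∈ 𝒞, ∀ i : ℤ,
    (((preadditiveCoyoneda.obj (Opposite.op C)).mapHomologicalComplex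
      (ComplexShape.up ℤ)).obj X).ExactAt i

/-- A chain map `f` is a `𝒞`-quasi-isomorphism if `Hom_𝒜(C, f)` is a quasi-isomorphism
for every `C ∈ 𝒞`. -/
def CQuasiIso (𝒞 : Set A) {X Y : CochainComplex A ℤ} (f : X ⟶ Y) : Prop :=
  ∀ C ∈ 𝒞, QuasiIso (((preadditiveCoyoneda.obj (Opposite.op C)).mapHomologicalComplex
      (ComplexShape.up ℤ)).map f)

/-- A cochain complex is bounded above. -/
def BoundedAbove (X : CochainComplex A ℤ) : Prop :=
  ∃ n : ℤ, ∀ i : ℤ, n < i → IsZero (X.X i)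

open Opposite

/-- For `P` projective, the functor `Hom(P, -)` to abelian groups preserves homology. -/
noncomputable instance preservesHomology_coyoneda_of_projective (P : A) [Projective P] :
    (preadditiveCoyoneda.obj (op P)).PreservesHomology := by
  have h1 : PreservesFiniteColimits (preadditiveCoyonedaObj P ⋙ forget₂ _ AddCommGrpCat.{v}) :=
    comp_preservesFiniteColimits _ _
  exact inferInstanceAs
    ((preadditiveCoyonedaObj P ⋙ forget₂ _ AddCommGrpCat).PreservesHomology)

/-- Detecting isomorphisms via `Hom(P, -)` for projectives `P`. -/
lemma isIso_of_projective_bij [EnoughProjectives A] {Z W : A} (g : Z ⟶ W)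
    (h : ∀ P : A, Projective P → IsIso ((preadditiveCoyoneda.obj (op P)).map g)) :
    IsIso g := by
  -- epi
  have hepi : Epi g := by
    haveI := h (Projective.over W) inferInstance
    have hb := (ConcreteCategory.bijective_of_isIso
      ((preadditiveCoyoneda.obj (op (Projective.over W))).map g)).2
    obtain ⟨u, hu⟩ := hb (Projective.π W)
    have hu' : u ≫ g = Projective.π W := hu
    exact epi_of_epi_fac hu'
  -- mono
  have hmono : Mono g := by
    apply Abelian.mono_of_kernel_ι_eq_zero
    set P := Projective.over (kernel g)
    haveI := h P inferInstance
    have hinj := (ConcreteCategory.bijective_of_isIso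
      ((preadditiveCoyoneda.obj (op P)).map g)).1
    have : (Projective.π (kernel g) ≫ kernel.ι g) ≫ g = (0 : P ⟶ Z) ≫ g := by
      simp
    have h0 : Projective.π (kernel g) ≫ kernel.ι g = (0 : P ⟶ Z) := hinj this
    rw [← cancel_epi (Projective.π (kernel g))]
    simpa using h0
  exact isIso_of_mono_of_epi g

/-- if `𝒜` has enough projectives and all projectives belong to `𝒞`, then
every `𝒞`-quasi-isomorphism is a quasi-isomorphism. -/
theorem stmt4 (𝒞 : Set A) [EnoughProjectives A]
    (hP : ∀ P : A, Projective P → P ∈ 𝒞)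
    {X Y : CochainComplex A ℤ} (f : X ⟶ Y) (hf : CQuasiIso 𝒞 f) :
    QuasiIso f := by
  rw [quasiIso_iff]
  intro i
  rw [quasiIsoAt_iff]
  set φ := (HomologicalComplex.shortComplexFunctor A (ComplexShape.up ℤ) i).map f with hφ
  have γ : ShortComplex.LeftHomologyMapData φ _ _ :=
    (default : ShortComplex.LeftHomologyMapData φ
      ((HomologicalComplex.shortComplexFunctor A (ComplexShape.up ℤ) i).obj X).leftHomologyData
      ((HomologicalComplex.shortComplexFunctor A (ComplexShape.up ℤ) i).obj Y).leftHomologyData)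
  rw [γ.quasiIso_iff]
  apply isIso_of_projective_bij
  intro P hPproj
  haveI : Projective P := hPproj
  haveI := hf P (hP P hPproj)
  have hq : QuasiIsoAt (((preadditiveCoyoneda.obj (op P)).mapHomologicalComplex
      (ComplexShape.up ℤ)).map f) i := inferInstance
  rw [quasiIsoAt_iff] at hq
  have hq' : ShortComplex.QuasiIso
      ((preadditiveCoyoneda.obj (op P)).mapShortComplex.map φ) := hq
  have := (γ.map (preadditiveCoyoneda.obj (op P))).quasiIso_iff.mp hq'
  rwa [ShortComplex.LeftHomologyMapData.map_φH] at this
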